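/- Fix an integer n ≥ 2 and set b := -n + i. If s is a Gaussian integer with T_n ∩ (T_n + s) ≠ ∅, then there exists an integer δ with |δ| ≤ n² such that T_n ∩ (T_n + (b·s + δ)) ≠ ∅; that is, b·s + δ is again a neighbour of T_n. -/

import Mathlib

open Complex Filter Pointwise

/-- `piSum b d = ∑_{j≥1} d_j b^{-j}` (0-indexed: `d j` is the `(j+1)`-st digit). -/
noncomputable def piSum (b : ℂ) (d : ℕ → ℤ) : ℂ :=
  ∑' j : ℕ, (d j : ℂ) * b ^ (-((j : ℤ) + 1))

/-- The `n`-th fundamental tile `T_n`. -/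
def fundTile (n : ℕ) : Set ℂ :=
  {z | ∃ d : ℕ → ℤ, (∀ j, 0 ≤ d j ∧ d j ≤ (n : ℤ) ^ 2) ∧
    z = piSum (-(n : ℂ) + Complex.I) d}

lemma summable_digits {b : ℂ} (hb : 1 < ‖b‖) {d : ℕ → ℤ} {C : ℝ}
    (hC : ∀ j, ‖(d j : ℂ)‖ ≤ C) :
    Summable (fun j : ℕ => (d j : ℂ) * b ^ (-((j : ℤ) + 1))) := by
  apply Summable.of_norm
  have hb0 : (0:ℝ) < ‖b‖ := lt_trans one_pos hb
  have hr : ‖b‖⁻¹ < 1 := inv_lt_one_of_one_lt₀ hb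
  have hr0 : (0:ℝ) ≤ ‖b‖⁻¹ := by positivity
  apply Summable.of_nonneg_of_le (fun j => norm_nonneg _) (fun j => ?_)
    ((summable_geometric_of_lt_one hr0 hr).mul_left (C * ‖b‖⁻¹))
  have hz : ‖b ^ (-((j:ℤ)+1))‖ = ‖b‖⁻¹ ^ (j+1) := by
    rw [norm_zpow, zpow_neg, ← inv_zpow]
    norm_cast
  rw [norm_mul, hz, pow_succ]
  calc ‖((d j : ℂ))‖ * (‖b‖⁻¹ ^ j * ‖b‖⁻¹)
      ≤ C * (‖b‖⁻¹ ^ j * ‖b‖⁻¹) := by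
        apply mul_le_mul_of_nonneg_right (hC j)
        positivity
    _ = C * ‖b‖⁻¹ * ‖b‖⁻¹ ^ j := by ring

lemma shift_lemma {b : ℂ} (hb : 1 < ‖b‖) {d : ℕ → ℤ} {C : ℝ}
    (hC : ∀ j, ‖(d j : ℂ)‖ ≤ C) :
    b * piSum b d = (d 0 : ℂ) + piSum b (fun j => d (j + 1)) := by
  have hb0 : b ≠ 0 := by
    intro h; rw [h, norm_zero] at hb; linarith
  have hsum := summable_digits hb hC
  have key : ∀ j : ℕ, b * ((d j : ℂ) * b ^ (-((j:ℤ)+1))) = (d j : ℂ) * b ^ (-(j:ℤ)) := by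
    intro j
    have h1 : b ^ ((1:ℤ) + (-((j:ℤ)+1))) = b ^ (1:ℤ) * b ^ (-((j:ℤ)+1)) :=
      zpow_add₀ hb0 1 (-((j:ℤ)+1))
    have h2 : ((1:ℤ) + (-((j:ℤ)+1))) = -(j:ℤ) := by ring
    rw [h2, zpow_one] at h1
    rw [h1]; ring
  have hsum' : Summable (fun j : ℕ => (d j : ℂ) * b ^ (-(j:ℤ))) := by
    have := hsum.mul_left b
    simpa only [key] using this
  calc b * piSum b d = ∑' j : ℕ, b * ((d j : ℂ) * b ^ (-((j:ℤ)+1))) := (hsum.tsum_mul_left b).symm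
    _ = ∑' j : ℕ, (d j : ℂ) * b ^ (-(j:ℤ)) := by simp only [key]
    _ = (d 0 : ℂ) * b ^ (-(0:ℤ)) + ∑' j : ℕ, (d (j+1) : ℂ) * b ^ (-((j:ℤ)+1)) := by
        rw [Summable.tsum_eq_zero_add hsum']
        norm_cast
    _ = (d 0 : ℂ) + piSum b (fun j => d (j + 1)) := by
        rw [piSum]; norm_num

theorem stmt_3 (n : ℕ) (hn : 2 ≤ n) (s : ℂ)
    (hs : ∃ p q : ℤ, s = (p : ℂ) + (q : ℂ) * Complex.I)
    (hnbr : (fundTile n ∩ (fundTile n + {s})).Nonempty) :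
    ∃ δ : ℤ, |δ| ≤ (n : ℤ) ^ 2 ∧
      (fundTile n ∩ (fundTile n + {(-(n : ℂ) + Complex.I) * s + (δ : ℂ)})).Nonempty := by
  set b : ℂ := -(n : ℂ) + Complex.I with hbdef
  have hn2 : (2:ℝ) ≤ (n:ℝ) := by exact_mod_cast hn
  have hb : 1 < ‖b‖ := by
    have hsq : ‖b‖ ^ 2 = (n:ℝ)^2 + 1 := by
      rw [Complex.sq_norm]
      simp [hbdef, Complex.normSq_apply]; ring
    nlinarith [norm_nonneg b]
  obtain ⟨z, hz1, hz2⟩ := hnbr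
  obtain ⟨d, hd, hzd⟩ := hz1
  rw [Set.mem_add] at hz2
  obtain ⟨a, ha, t, ht, hat⟩ := hz2
  obtain ⟨e, he, hae⟩ := ha
  rw [Set.mem_singleton_iff] at ht
  subst ht
  rw [← hbdef] at hzd hae
  have hCd : ∀ j, ‖((d j : ℂ))‖ ≤ ((n:ℝ)^2) := by
    intro j
    rw [Complex.norm_intCast,
      _root_.abs_of_nonneg (by exact_mod_cast (hd j).1 : (0:ℝ) ≤ ((d j : ℤ) : ℝ))]
    exact_mod_cast (hd j).2
  have hCe : ∀ j, ‖((e j : ℂ))‖ ≤ ((n:ℝ)^2) := by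
    intro j
    rw [Complex.norm_intCast,
      _root_.abs_of_nonneg (by exact_mod_cast (he j).1 : (0:ℝ) ≤ ((e j : ℤ) : ℝ))]
    exact_mod_cast (he j).2
  have hshd := shift_lemma hb hCd
  have hshe := shift_lemma hb hCe
  refine ⟨e 0 - d 0, ?_, ?_⟩
  · rw [abs_sub_le_iff]
    constructor
    · linarith [(he 0).2, (hd 0).1]
    · linarith [(hd 0).2, (he 0).1]
  · refine ⟨piSum b (fun j => d (j+1)), ⟨fun j => d (j+1), fun j => hd (j+1), rfl⟩, ?_⟩
    rw [Set.mem_add]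
    refine ⟨piSum b (fun j => e (j+1)), ⟨fun j => e (j+1), fun j => he (j+1), rfl⟩,
      b * t + ((e 0 : ℂ) - (d 0 : ℂ)), ?_, ?_⟩
    · rw [Set.mem_singleton_iff]; push_cast; ring
    · have hz : b * z = b * a + b * t := by rw [← hat]; ring
      rw [hzd, hae, hshd, hshe] at hz
      linear_combination -hz
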